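/- For every graph G on n vertices, define the split graph G' on vertex set A ∪ B with A = {a₁,…,aₙ}, B = {b₁,…,bₙ}, where A is a clique, B is independent, and aᵢ is adjacent to bⱼ iff i = j or vᵢvⱼ ∈ E(G). Then for every k, G has a dominating set of size at most k if and only if G' has a dominating set of size at most k. -/

import Mathlib

/-- The split graph `G'` built from a graph `G` on `Fin n`: the left copy `A` is a
clique, the right copy `B` is independent, and `aᵢ ~ bⱼ` iff `i = j` or `vᵢvⱼ ∈ E(G)`. -/
def splitGraph {n : ℕ} (G : SimpleGraph (Fin n)) : SimpleGraph (Fin n ⊕ Fin n) where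
  Adj u v :=
    match u, v with
    | .inl i, .inl j => i ≠ j
    | .inl i, .inr j => i = j ∨ G.Adj i j
    | .inr i, .inl j => j = i ∨ G.Adj j i
    | .inr _, .inr _ => False
  symm := by
    constructor
    rintro (i | i) (j | j) h <;> simp_all [ne_comm]
  loopless := by
    constructor
    rintro (i | i) h <;> simp_all [G.loopless.irrefl i]

/-- `D` is a dominating set of `G`. -/
def IsDomSet {V : Type*} (G : SimpleGraph V) (D : Finset V) : Prop :=
  ∀ v, v ∉ D → ∃ d ∈ D, G.Adj d v

theorem stmt_7 {n : ℕ} (G : SimpleGraph (Fin n)) (k : ℕ) :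
    (∃ D : Finset (Fin n), IsDomSet G D ∧ D.card ≤ k) ↔
    (∃ D' : Finset (Fin n ⊕ Fin n), IsDomSet (splitGraph G) D' ∧ D'.card ≤ k) := by
  constructor
  · rintro ⟨D, hD, hk⟩
    refine ⟨D.map ⟨Sum.inl, Sum.inl_injective⟩, ?_, by simpa using hk⟩
    rintro (j | j) hj
    · simp only [Finset.mem_map, Function.Embedding.coeFn_mk] at hj
      push_neg at hj
      have hjD : j ∉ D := fun h => (hj j h rfl)
      obtain ⟨d, hd, hadj⟩ := hD j hjD
      exact ⟨.inl d, Finset.mem_map_of_mem _ hd, G.ne_of_adj hadj⟩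
    · by_cases hjD : j ∈ D
      · exact ⟨.inl j, Finset.mem_map_of_mem _ hjD, Or.inl rfl⟩
      · obtain ⟨d, hd, hadj⟩ := hD j hjD
        exact ⟨.inl d, Finset.mem_map_of_mem _ hd, Or.inr hadj⟩
  · rintro ⟨D', hD', hk⟩
    refine ⟨D'.image (Sum.elim id id), ?_, le_trans Finset.card_image_le hk⟩
    intro v hv
    have hinl : Sum.inl v ∉ D' := fun h => hv (Finset.mem_image_of_mem _ h)
    have hinr : Sum.inr v ∉ D' := fun h => hv (Finset.mem_image_of_mem _ h)
    obtain ⟨d, hd, hadj⟩ := hD' (.inr v) hinr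
    match d, hadj with
    | .inl j, hadj =>
      rcases hadj with rfl | hadj
      · exact absurd hd hinl
      · exact ⟨j, Finset.mem_image_of_mem _ hd, hadj⟩
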